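/- Let q ≥ 2, m > 3, n = q^{2m} - 1. For all integers x, y with 1 ≤ x, y < n and x·y < (q^m - 1)^2 if m is odd (resp. x·y < q^{2m} - 1 - q^{m-1} if m is even), and for all odd l ∈ {1, 3, ..., 2m-1}: ((-x·q^l) mod n)·((-y·q^l) mod n) ≥ (q^m - 1)^2 if m is odd (resp. ≥ q^{2m} - 1 - q^{m-1} if m is even). -/
import Mathlib

private lemma digits_emod (s s' n x : ℤ) (hs : 1 ≤ s) (hs' : 1 ≤ s')
    (hn : n = s * s' - 1) (hx1 : 1 ≤ x) (hxn : x ≤ n - 1) :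
    (-x * s) % n = n - (s * (x % s') + x / s') ∧
      1 ≤ n - (s * (x % s') + x / s') ∧ n - (s * (x % s') + x / s') ≤ n - 1 := by
  have hs'0 : 0 < s' := hs'
  have hc0 : 0 ≤ x % s' := Int.emod_nonneg x (by omega)
  have hcs : x % s' < s' := Int.emod_lt_of_pos x hs'0
  have hxd : s' * (x / s') + x % s' = x := Int.mul_ediv_add_emod x s'
  have ha0 : 0 ≤ x / s' := Int.ediv_nonneg (by omega) (by omega)
  have has : x / s' ≤ s - 1 := by nlinarith [hxd, hc0, hcs]
  have hub : s * (x % s') + x / s' ≤ n - 1 := by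
    rcases le_or_gt (x % s') (s' - 2) with h | h
    · nlinarith
    · have hce : x % s' = s' - 1 := by omega
      have : x / s' ≤ s - 2 := by nlinarith
      nlinarith
  have hlb : 1 ≤ s * (x % s') + x / s' := by
    rcases le_or_gt 1 (x % s') with h | h
    · nlinarith
    · have hce : x % s' = 0 := by omega
      have : 1 ≤ x / s' := by nlinarith
      nlinarith
  refine ⟨?_, by omega, by omega⟩
  have key : -x * s = (n - (s * (x % s') + x / s')) + n * (-(x / s') - 1) := by
    nlinarith [hxd, hn]
  rw [key, Int.add_mul_emod_self_left (n - (s * (x % s') + x / s')) n (-(x / s') - 1),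
    Int.emod_eq_of_lt (by omega) (by omega)]


private lemma dee_one (S c b : ℤ) (hS : 16 ≤ S) (hc1 : 1 ≤ c) (hcS2 : c ≤ S - 2)
    (hb1 : 1 ≤ b) (hbs : b ≤ S - 1)
    (hprod : c * (b * S + (S - 1)) ≤ S^2 - 2 - (2*S - 2)) :
    S^2 - 1 - (2*S - 2) ≤ (S^2 - 1 - S*c) * (S - 1 - b) := by
  have hbS2 : b ≤ S - 2 := by
    by_contra hcon
    push_neg at hcon
    have hbe : b = S - 1 := by omega
    rw [hbe] at hprod
    have h2 : 1 * ((S-1) * S + (S-1)) ≤ c * ((S-1) * S + (S-1)) :=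
      mul_le_mul_of_nonneg_right hc1 (by nlinarith [sq_nonneg S])
    nlinarith [h2, hprod]
  have key1 : (c-1)*S^2 + 2*S - c ≤ c*S*(S - 1 - b) := by nlinarith [hprod]
  have hG1pos : 0 ≤ S^2 - 1 - S*c := by nlinarith
  have hS3 : (0:ℤ) ≤ S^3 - S := by
    nlinarith [mul_nonneg (show (0:ℤ) ≤ S by linarith) (show (0:ℤ) ≤ S^2 - 1 by nlinarith)]
  have hS3' : (0:ℤ) ≤ S^3 - S^2 - 2*S + 1 := by
    nlinarith [mul_nonneg (show (0:ℤ) ≤ S by linarith) (show (0:ℤ) ≤ S^2 - S - 2 by nlinarith)]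
  have key2 : c*S*(S-1)^2 ≤ (S^2 - 1 - S*c) * ((c-1)*S^2 + 2*S - c) := by
    nlinarith [mul_nonneg hS3 (mul_nonneg (show (0:ℤ) ≤ c - 1 by omega) (show (0:ℤ) ≤ S - 2 - c by omega)),
      mul_nonneg (show (0:ℤ) ≤ c by omega) hS3']
  have key3 : c*S*(S-1)^2 ≤ (S^2 - 1 - S*c) * (c*S*(S - 1 - b)) :=
    le_trans key2 (mul_le_mul_of_nonneg_left key1 hG1pos)
  have hcs_pos : 0 < c * S := by positivity
  have hfin : c*S*((S-1)^2) ≤ c*S*((S^2 - 1 - S*c) * (S - 1 - b)) := by nlinarith [key3]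
  have := le_of_mul_le_mul_left hfin hcs_pos
  nlinarith [this]

set_option maxHeartbeats 1000000 in
private lemma core_digits (q S s s' r c b d : ℤ)
    (hq : 2 ≤ q) (hS : 16 ≤ S) (hss' : s * s' = S^2)
    (hqs : q ≤ s) (hsr : s ≤ r) (hr2S : r ≤ 2*S - 2) (hSqr : S ≤ q * r)
    (hSs' : S ≤ s')
    (hLM : s * q ≤ S ∨ (s = S ∧ s' = S ∧ r = 2*S - 2))
    (hc1 : 1 ≤ c) (hcS : c ≤ S - 1)
    (hb0 : 0 ≤ b) (hbs : b ≤ s - 1)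
    (hd0 : 0 ≤ d) (hds' : d ≤ s' - 1)
    (hY : b * s' + d ≤ S^2 - 2)
    (hprod : c * (b * s' + d) ≤ S^2 - 2 - r) :
    S^2 - 1 - r ≤ (S^2 - 1 - s * c) * (S^2 - 1 - (s * d + b)) := by
  have hs2 : 2 ≤ s := le_trans hq hqs
  have hsS : s ≤ S := by
    rcases hLM with h | ⟨h, _, _⟩
    · nlinarith [mul_le_mul_of_nonneg_left hq (show (0:ℤ) ≤ s by linarith)]
    · omega
  have hs'pos : 0 < s' := by linarith
  have hscS : s * c ≤ S * (S-1) := by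
    have h1 : s * c ≤ s * (S - 1) := mul_le_mul_of_nonneg_left hcS (by linarith)
    have h2 : s * (S - 1) ≤ S * (S - 1) := mul_le_mul_of_nonneg_right hsS (by linarith)
    linarith
  have hG1 : S - 1 ≤ S^2 - 1 - s * c := by nlinarith
  have hsd : s * d ≤ s * s' - s := by
    have := mul_le_mul_of_nonneg_left hds' (show (0:ℤ) ≤ s by linarith)
    nlinarith
  have hG2pos : 1 ≤ S^2 - 1 - (s * d + b) := by
    by_contra hcon
    push_neg at hcon
    have hd' : s' - 1 ≤ d := by
      by_contra h2
      push_neg at h2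
      have h3 : d ≤ s' - 2 := by omega
      have := mul_le_mul_of_nonneg_left h3 (show (0:ℤ) ≤ s by linarith)
      nlinarith
    have hd'' : d = s' - 1 := by omega
    rw [hd''] at hcon hY
    nlinarith
  rcases le_or_gt b 0 with hb | hb1
  · have hb' : b = 0 := le_antisymm hb hb0
    subst hb'
    simp only [zero_mul, zero_add, add_zero] at hprod hY ⊢
    rcases hLM with hlm | ⟨hsS', hs'S', hrS⟩
    · rcases le_or_gt s 2 with hs2' | hs3
      · have hs2e : s = 2 := by omega
        subst hs2e
        have hq2 : q = 2 := by omega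
        rw [hq2] at hSqr
        rcases le_or_gt (2*c) r with hcr | hcr
        · have h2 : 0 ≤ S^2 - 1 - 2*c := by nlinarith
          nlinarith
        · have h4c : S + 2 ≤ 4 * c := by linarith
          have hd4S : d ≤ 4*S - 1 := by
            by_contra hcon
            push_neg at hcon
            have h1 : d * (S + 2) ≤ d * (4 * c) := mul_le_mul_of_nonneg_left h4c hd0
            have h2 : (4*S) * (S + 2) ≤ d * (S + 2) :=
              mul_le_mul_of_nonneg_right (by omega) (by linarith)
            nlinarith
          have hg1 : S^2 - 1 - 2*S + 2 ≤ S^2 - 1 - 2*c := by linarith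
          have hg2 : S^2 - 1 - 8*S + 2 ≤ S^2 - 1 - 2*d := by linarith
          have hmul : (S^2 - 1 - 2*S + 2) * (S^2 - 1 - 8*S + 2) ≤ (S^2 - 1 - 2*c) * (S^2 - 1 - 2*d) :=
            mul_le_mul hg1 hg2 (by nlinarith) (by nlinarith)
          nlinarith
      · -- s ≥ 3
        have h2s : 2*s ≤ S := by
          nlinarith [mul_le_mul_of_nonneg_left hq (show (0:ℤ) ≤ s by linarith)]
        have hsc2 : s * c ≤ s * (S - 1) := mul_le_mul_of_nonneg_left hcS (by linarith)
        have hss4 : (2*s) * (S - 1) ≤ S * (S - 1) := mul_le_mul_of_nonneg_right h2s (by linarith)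
        have h2G1 : S^2 + S - 2 ≤ 2*(S^2 - 1 - s*c) := by nlinarith
        have hG2 : 2 ≤ S^2 - 1 - s*d := by nlinarith
        have hmul : (S^2 - 1 - s*c) * 2 ≤ (S^2 - 1 - s*c) * (S^2 - 1 - s*d) :=
          mul_le_mul_of_nonneg_left hG2 (by linarith)
        nlinarith
    · -- s = S, b = 0
      have hG2' : S - 1 ≤ S^2 - 1 - s*d := by nlinarith
      have hmul : (S-1) * (S-1) ≤ (S^2 - 1 - s*c) * (S^2 - 1 - s*d) :=
        mul_le_mul hG1 hG2' (by linarith) (by linarith)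
      nlinarith
  · -- b ≥ 1
    have hYs' : s' ≤ b * s' + d := by
      nlinarith [mul_le_mul_of_nonneg_right (show (1:ℤ) ≤ b by omega) (show (0:ℤ) ≤ s' by linarith)]
    have hcs1 : c ≤ s - 1 := by
      by_contra hcon
      push_neg at hcon
      have h1 : s * s' ≤ c * s' := mul_le_mul_of_nonneg_right (by omega) (by linarith)
      have h2 : c * s' ≤ c * (b * s' + d) := mul_le_mul_of_nonneg_left hYs' (by linarith)
      nlinarith
    rcases hLM with hlm | ⟨hsS', hs'S', hrS⟩
    · have h2s : 2*s ≤ S := by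
        nlinarith [mul_le_mul_of_nonneg_left hq (show (0:ℤ) ≤ s by linarith)]
      rcases le_or_gt 2 (S^2 - 1 - (s*d + b)) with hG2 | hG2
      · have hsc2 : s * c ≤ s * (s - 1) := mul_le_mul_of_nonneg_left (by omega) (by linarith)
        have hss4 : (2*s) * (2*s) ≤ S * S := mul_le_mul h2s h2s (by linarith) (by linarith)
        have hmul : (S^2 - 1 - s*c) * 2 ≤ (S^2 - 1 - s*c) * (S^2 - 1 - (s*d + b)) :=
          mul_le_mul_of_nonneg_left hG2 (by nlinarith)
        nlinarith
      · have hG2e : s*d + b = S^2 - 2 := by omega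
        have hde : d = s' - 1 := by
          by_contra h2
          push_neg at h2
          have h3 : d ≤ s' - 2 := by omega
          have := mul_le_mul_of_nonneg_left h3 (show (0:ℤ) ≤ s by linarith)
          nlinarith
        have hbe : b = s - 2 := by
          have h4 : s*d = s*s' - s := by rw [hde]; ring
          omega
        rcases le_or_gt c 1 with hc1' | hc2
        · have hce : c = 1 := le_antisymm hc1' hc1
          have hG2one : S^2 - 1 - (s*d + b) = 1 := by omega
          rw [hG2one, hce]
          nlinarith
        · exfalso
          have hYe : b*s' + d = s*s' - s' - 1 := by rw [hbe, hde]; ring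
          rw [hYe] at hprod
          have h2s' : q * s' ≤ s * s' := mul_le_mul_of_nonneg_right hqs (by linarith)
          have h2s'' : 2 * s' ≤ q * s' := mul_le_mul_of_nonneg_right hq (by linarith)
          have hx : 2 * (s*s' - s' - 1) ≤ c * (s*s' - s' - 1) :=
            mul_le_mul_of_nonneg_right (by omega) (by nlinarith)
          nlinarith
    · -- s = s' = S, r = 2S-2, b ≥ 1
      rw [hs'S'] at hprod hYs' hY hds'
      rw [hsS'] at hbs hcs1 hG2pos hsd ⊢
      rw [hrS] at hprod ⊢
      have hcS2 : c ≤ S - 2 := by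
        by_contra hcon
        push_neg at hcon
        have hce : c = S - 1 := by omega
        rw [hce] at hprod
        have h2 : (S-1) * S ≤ (S-1) * (b * S + d) :=
          mul_le_mul_of_nonneg_left hYs' (by linarith)
        nlinarith
      rcases le_or_gt d (S - 2) with hdle | hdgt
      · have hg2 : S ≤ S^2 - 1 - (S*d + b) := by
          have := mul_le_mul_of_nonneg_left hdle (show (0:ℤ) ≤ S by linarith)
          nlinarith
        have hg1 : 2*S - 1 ≤ S^2 - 1 - S*c := by
          have := mul_le_mul_of_nonneg_left hcS2 (show (0:ℤ) ≤ S by linarith)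
          nlinarith
        have hmul : (2*S - 1) * S ≤ (S^2 - 1 - S*c) * (S^2 - 1 - (S*d + b)) :=
          mul_le_mul hg1 hg2 (by linarith) (by linarith)
        have hexp : (2*S - 1) * S = 2*S^2 - S := by ring
        linarith
      · have hde : d = S - 1 := by omega
        rw [hde] at hprod ⊢
        have hG2e : S^2 - 1 - (S*(S-1) + b) = S - 1 - b := by ring
        rw [hG2e]
        exact dee_one S c b hS hc1 hcS2 hb1 hbs hprod

private lemma key_low (q S s s' r x y : ℤ)
    (hq : 2 ≤ q) (hS : 16 ≤ S) (hss' : s * s' = S^2)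
    (hqs : q ≤ s) (hsr : s ≤ r) (hr2S : r ≤ 2*S - 2) (hSqr : S ≤ q * r)
    (hSs' : S ≤ s')
    (hLM : s * q ≤ S ∨ (s = S ∧ s' = S ∧ r = 2*S - 2))
    (hx1 : 1 ≤ x) (hy1 : 1 ≤ y) (hyn : y ≤ S^2 - 2) (hxy : x ≤ y)
    (hprod : x * y ≤ S^2 - 2 - r) :
    S^2 - 1 - r ≤ (S^2 - 1 - (s * (x % s') + x / s')) * (S^2 - 1 - (s * (y % s') + y / s')) := by
  have hs2 : 2 ≤ s := le_trans hq hqs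
  have hr2 : 2 ≤ r := le_trans hs2 hsr
  have hs'pos : (0:ℤ) < s' := by linarith
  have hxS : x ≤ S - 1 := by
    by_contra h
    push_neg at h
    have h1 : S * S ≤ x * x := mul_le_mul (by omega) (by omega) (by linarith) (by omega)
    have h2 : x * x ≤ x * y := mul_le_mul_of_nonneg_left hxy (by linarith)
    nlinarith
  have hxmod : x % s' = x := Int.emod_eq_of_lt (by linarith) (by omega)
  have hxdiv : x / s' = 0 := Int.ediv_eq_zero_of_lt (by linarith) (by omega)
  have hYd : s' * (y / s') + y % s' = y := Int.mul_ediv_add_emod y s'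
  have hd0 : 0 ≤ y % s' := Int.emod_nonneg y (by omega)
  have hds' : y % s' ≤ s' - 1 := by have := Int.emod_lt_of_pos y hs'pos; omega
  have hb0 : 0 ≤ y / s' := Int.ediv_nonneg (by linarith) (by linarith)
  have hbs : y / s' ≤ s - 1 := by
    by_contra h
    push_neg at h
    have h1 : s' * s ≤ s' * (y / s') := mul_le_mul_of_nonneg_left (by omega) (by linarith)
    nlinarith
  have hYle : (y / s') * s' + y % s' ≤ S^2 - 2 := by
    rw [mul_comm]; omega
  have hprod2 : x * ((y / s') * s' + y % s') ≤ S^2 - 2 - r := by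
    have heq : (y / s') * s' + y % s' = y := by rw [mul_comm]; omega
    rw [heq]; exact hprod
  have hmain := core_digits q S s s' r x (y/s') (y%s') hq hS hss' hqs hsr hr2S hSqr hSs'
    hLM hx1 hxS hb0 hbs hd0 hds' hYle hprod2
  rw [hxmod, hxdiv]
  have hrw : s * x + 0 = s * x := by ring
  rw [hrw]
  exact hmain

private lemma A_inv (q : ℤ) (m l : ℕ) (hl : l ≤ 2*m) (hbig : 2 ≤ q^(2*m) - 1)
    (z : ℤ) (hz0 : 0 ≤ z) (hzn : z ≤ q^(2*m) - 2) :
    (-((-z * q^l) % (q^(2*m) - 1)) * q^(2*m-l)) % (q^(2*m) - 1) = z := by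
  set n := q^(2*m) - 1 with hn
  have hqq : q^l * q^(2*m-l) = n + 1 := by
    rw [hn, ← pow_add]
    have : l + (2*m - l) = 2*m := by omega
    rw [this]; ring
  have hmod : (-z * q^l) % n = -z*q^l - n * ((-z*q^l)/n) := Int.emod_def _ _
  have hkey : -((-z * q^l) % n) * q^(2*m-l) = z + n * (z + ((-z*q^l)/n) * q^(2*m-l)) := by
    rw [hmod]
    linear_combination z * hqq
  rw [hkey, Int.add_mul_emod_self_left z n (z + ((-z*q^l)/n) * q^(2*m-l)),
    Int.emod_eq_of_lt hz0 (by omega)]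

private lemma A_bounds (q : ℤ) (hq : 2 ≤ q) (m l : ℕ) (hl : l ≤ 2*m) (hm : 1 ≤ m)
    (x : ℤ) (hx1 : 1 ≤ x) (hxn : x ≤ q^(2*m) - 2) :
    (-x * q^l) % (q^(2*m) - 1) =
      (q^(2*m) - 1) - (q^l * (x % q^(2*m-l)) + x / q^(2*m-l)) ∧
    1 ≤ (q^(2*m) - 1) - (q^l * (x % q^(2*m-l)) + x / q^(2*m-l)) ∧
    (q^(2*m) - 1) - (q^l * (x % q^(2*m-l)) + x / q^(2*m-l)) ≤ (q^(2*m) - 1) - 1 := by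
  have h0 : (0:ℤ) < q := by linarith
  have hs : (1:ℤ) ≤ q^l := pow_pos h0 l
  have hs' : (1:ℤ) ≤ q^(2*m-l) := pow_pos h0 (2*m-l)
  have hn : q^(2*m) - 1 = q^l * q^(2*m-l) - 1 := by
    rw [← pow_add]
    have : l + (2*m - l) = 2*m := by omega
    rw [this]
  exact digits_emod (q^l) (q^(2*m-l)) (q^(2*m) - 1) x hs hs' hn hx1 (by omega)

private lemma key_side (q : ℤ) (hq : 2 ≤ q) (m l : ℕ) (hm : 3 < m) (hl1 : 1 ≤ l)
    (hlm : l ≤ m) (hpar : l = m → m % 2 = 1) (r : ℤ)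
    (hr : r = if m % 2 = 1 then 2*q^m - 2 else q^(m-1)) :
    ∀ x y : ℤ, 1 ≤ x → x ≤ q^(2*m) - 2 → 1 ≤ y → y ≤ q^(2*m) - 2 → x ≤ y →
      x * y ≤ (q^m)^2 - 2 - r →
      (q^m)^2 - 1 - r ≤ ((-x * q^l) % (q^(2*m) - 1)) * ((-y * q^l) % (q^(2*m) - 1)) := by
  intro x y hx1 hxn hy1 hyn hxy hprodxy
  have hq1 : (1:ℤ) ≤ q := by linarith
  have hS16 : (16:ℤ) ≤ q^m := by
    calc (16:ℤ) = 2^4 := by norm_num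
    _ ≤ q^4 := pow_le_pow_left₀ (by norm_num) hq 4
    _ ≤ q^m := pow_le_pow_right₀ hq1 (by omega)
  have hpow2m : q^(2*m) = (q^m)^2 := by rw [two_mul, pow_add, sq]
  have hss' : q^l * q^(2*m-l) = (q^m)^2 := by
    rw [← pow_add, ← hpow2m]
    congr 1
    omega
  have hqs : q ≤ q^l := by
    have := pow_le_pow_right₀ hq1 hl1
    simpa using this
  have hSs' : q^m ≤ q^(2*m-l) := pow_le_pow_right₀ hq1 (by omega)
  have hmain : ∀ r' : ℤ, q^l ≤ r' → r' ≤ 2*q^m - 2 → q^m ≤ q * r' →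
      (q^l * q ≤ q^m ∨ (q^l = q^m ∧ q^(2*m-l) = q^m ∧ r' = 2*q^m - 2)) →
      x * y ≤ (q^m)^2 - 2 - r' →
      (q^m)^2 - 1 - r' ≤ (q^(2*m) - 1 - (q^l * (x % q^(2*m-l)) + x / q^(2*m-l))) *
        (q^(2*m) - 1 - (q^l * (y % q^(2*m-l)) + y / q^(2*m-l))) := by
    intro r' h1 h2 h3 h4 h5
    have := key_low q (q^m) (q^l) (q^(2*m-l)) r' x y hq hS16 hss' hqs h1 h2 h3 hSs' h4
      hx1 hy1 (by rw [hpow2m] at hyn; linarith) hxy h5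
    rw [hpow2m]
    exact this
  obtain ⟨hAx, _, _⟩ := A_bounds q hq m l (by omega) (by omega) x hx1 hxn
  obtain ⟨hAy, _, _⟩ := A_bounds q hq m l (by omega) (by omega) y hy1 hyn
  rw [hAx, hAy]
  rcases Nat.mod_two_eq_zero_or_one m with hm2 | hm2
  · have hr' : r = q^(m-1) := by rw [hr, hm2]; norm_num
    have hlne : l ≠ m := by
      intro h
      rw [hpar h] at hm2
      exact absurd hm2 (by norm_num)
    have hsr : q^l ≤ r := by rw [hr']; exact pow_le_pow_right₀ hq1 (by omega)
    have hqr : q * r = q^m := by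
      rw [hr', ← pow_succ']
      congr 1
      omega
    have hsq : q^l * q = q^(l+1) := by rw [pow_succ]
    have hLM : q^l * q ≤ q^m := by rw [hsq]; exact pow_le_pow_right₀ hq1 (by omega)
    have hr2S : r ≤ 2*q^m - 2 := by
      rw [hr']
      have : q^(m-1) ≤ q^m := pow_le_pow_right₀ hq1 (by omega)
      linarith
    exact hmain r hsr hr2S (by rw [hqr]) (Or.inl hLM) hprodxy
  · have hr' : r = 2*q^m - 2 := by rw [hr, hm2]; norm_num
    have hsr : q^l ≤ r := by
      rw [hr']
      have : q^l ≤ q^m := pow_le_pow_right₀ hq1 hlm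
      linarith
    have hqr : q^m ≤ q * r := by
      have h2r : 2 * r ≤ q * r := mul_le_mul_of_nonneg_right hq (by rw [hr']; linarith)
      rw [hr'] at h2r ⊢
      linarith
    have hLM : q^l * q ≤ q^m ∨ (q^l = q^m ∧ q^(2*m-l) = q^m ∧ r = 2*q^m - 2) := by
      rcases eq_or_lt_of_le hlm with he | hlt
      · right
        refine ⟨by rw [he], ?_, hr'⟩
        congr 1
        omega
      · left
        rw [← pow_succ]
        exact pow_le_pow_right₀ hq1 (by omega)
    exact hmain r hsr (by rw [hr']) hqr hLM hprodxy

/-- Hermitian key inequality: for 1 ≤ x, y < n = q^{2m} - 1 with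
x·y < (q^m - 1)^2 (m odd) resp. x·y < q^{2m} - 1 - q^{m-1} (m even), and any odd
l with 1 ≤ l ≤ 2m - 1, the product of residues is at least that same bound. -/
theorem stmt_12 (q : ℤ) (hq : 2 ≤ q) (m : ℕ) (hm : 3 < m) :
    ∀ x y : ℤ, 1 ≤ x → x < q ^ (2 * m) - 1 → 1 ≤ y → y < q ^ (2 * m) - 1 →
      x * y < (if m % 2 = 1 then (q ^ m - 1) ^ 2 else q ^ (2 * m) - 1 - q ^ (m - 1)) →
      ∀ l : ℕ, Odd l → l ≤ 2 * m - 1 →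
        ((-x * q ^ l) % (q ^ (2 * m) - 1)) * ((-y * q ^ l) % (q ^ (2 * m) - 1)) ≥
          (if m % 2 = 1 then (q ^ m - 1) ^ 2 else q ^ (2 * m) - 1 - q ^ (m - 1)) := by
  intro x y hx1 hxn hy1 hyn hxy l hlodd hlle
  have hq1 : (1:ℤ) ≤ q := by linarith
  have hS16 : (16:ℤ) ≤ q^m := by
    calc (16:ℤ) = 2^4 := by norm_num
    _ ≤ q^4 := pow_le_pow_left₀ (by norm_num) hq 4
    _ ≤ q^m := pow_le_pow_right₀ hq1 (by omega)
  have hpow2m : q^(2*m) = (q^m)^2 := by rw [two_mul, pow_add, sq]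
  have hbig : (2:ℤ) ≤ q^(2*m) - 1 := by nlinarith
  set r : ℤ := if m % 2 = 1 then 2*q^m - 2 else q^(m-1) with hrdef
  have hrm : q^(m-1) ≤ q^m := pow_le_pow_right₀ hq1 (by omega)
  have hrpos : 1 ≤ r := by
    have hp : (0:ℤ) < q^(m-1) := pow_pos (by linarith) (m-1)
    rw [hrdef]
    rcases Nat.mod_two_eq_zero_or_one m with h | h
    · simp only [h]
      norm_num
      linarith
    · simp only [h]
      norm_num
      linarith
  have hBr : (if m % 2 = 1 then (q ^ m - 1) ^ 2 else q ^ (2 * m) - 1 - q ^ (m - 1))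
      = (q^m)^2 - 1 - r := by
    rcases Nat.mod_two_eq_zero_or_one m with h | h <;> simp only [hrdef, h] <;> norm_num
    · rw [hpow2m]
    · ring
  rw [hBr] at hxy ⊢
  rw [ge_iff_le]
  have hxn' : x ≤ q^(2*m) - 2 := by omega
  have hyn' : y ≤ q^(2*m) - 2 := by omega
  have hl1 : 1 ≤ l := by
    have := Nat.odd_iff.mp hlodd
    omega
  have hxyB : x * y ≤ (q^m)^2 - 2 - r := by omega
  rcases le_or_gt l m with hlm | hlm
  · have hpar : l = m → m % 2 = 1 := by
      intro h
      subst h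
      exact Nat.odd_iff.mp hlodd
    rcases le_total x y with h2 | h2
    · exact key_side q hq m l hm hl1 hlm hpar r hrdef x y hx1 hxn' hy1 hyn' h2 hxyB
    · have := key_side q hq m l hm hl1 hlm hpar r hrdef y x hy1 hyn' hx1 hxn' h2
        (by linarith [mul_comm x y])
      rw [mul_comm] at this
      exact this
  · -- transpose to l' = 2m - l
    have hl'1 : 1 ≤ 2*m - l := by omega
    have hl'm : 2*m - l ≤ m := by omega
    have hpar' : 2*m - l = m → m % 2 = 1 := by
      intro h
      omega
    by_contra hcon
    push_neg at hcon
    obtain ⟨hAx, hAx1, hAxn⟩ := A_bounds q hq m l (by omega) (by omega) x hx1 hxn'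
    obtain ⟨hAy, hAy1, hAyn⟩ := A_bounds q hq m l (by omega) (by omega) y hy1 hyn'
    have hAx1' : 1 ≤ (-x * q ^ l) % (q ^ (2 * m) - 1) := by rw [hAx]; exact hAx1
    have hAxn' : (-x * q ^ l) % (q ^ (2 * m) - 1) ≤ q^(2*m) - 2 := by rw [hAx]; omega
    have hAy1' : 1 ≤ (-y * q ^ l) % (q ^ (2 * m) - 1) := by rw [hAy]; exact hAy1
    have hAyn' : (-y * q ^ l) % (q ^ (2 * m) - 1) ≤ q^(2*m) - 2 := by rw [hAy]; omega
    have hinvx : (-((-x * q ^ l) % (q ^ (2 * m) - 1)) * q^(2*m-l)) % (q^(2*m) - 1) = x :=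
      A_inv q m l (by omega) hbig x (by linarith) hxn'
    have hinvy : (-((-y * q ^ l) % (q ^ (2 * m) - 1)) * q^(2*m-l)) % (q^(2*m) - 1) = y :=
      A_inv q m l (by omega) hbig y (by linarith) hyn'
    have hABle : ((-x * q ^ l) % (q ^ (2 * m) - 1)) * ((-y * q ^ l) % (q ^ (2 * m) - 1)) ≤ (q^m)^2 - 2 - r := by
      have h1 := Int.lt_iff_add_one_le.mp hcon
      linarith
    rcases le_total ((-x * q ^ l) % (q ^ (2 * m) - 1)) ((-y * q ^ l) % (q ^ (2 * m) - 1)) with h2 | h2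
    · have := key_side q hq m (2*m-l) hm hl'1 hl'm hpar' r hrdef _ _
        hAx1' hAxn' hAy1' hAyn' h2 hABle
      rw [hinvx, hinvy] at this
      linarith
    · have := key_side q hq m (2*m-l) hm hl'1 hl'm hpar' r hrdef _ _
        hAy1' hAyn' hAx1' hAxn' h2 (by rw [mul_comm] at hABle; exact hABle)
      rw [hinvx, hinvy] at this
      nlinarith [this]
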